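/- Let η, η̂ ∈ (0,1] and M, M̂ > 0. Define, for z, ẑ ∈ [−1,1), U₂(z,ẑ) := −(1/8)[ηM(1+z)²√(1−z) + η̂M̂(1+ẑ)²√(1−ẑ)] + (1/2)(1+ẑ)E(z,ẑ)√(1−ẑ) and V(z,ẑ) := √(1−z) + √(1−ẑ). Then limsup of U₂(z,ẑ)/V(z,ẑ) as (z,ẑ) → (1,1) with z, ẑ ∈ [−1,1) equals (1/2)·max{−ηM, η̂M̂ − 2√(ηη̂MM̂)} = (1/2)η̂M̂ − √(ηη̂MM̂). Moreover this limsup is strictly negative if and only if η̂M̂ < 4ηM. -/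

import Mathlib

open Filter Topology

/-- E(z,ẑ) := √(η̂M̂)(√(η̂M̂)·ẑ − √(ηM)·z). -/
noncomputable def Efun (η η' M M' z z' : ℝ) : ℝ :=
  Real.sqrt (η' * M') * (Real.sqrt (η' * M') * z' - Real.sqrt (η * M) * z)

/-- The control-independent part U₂ of the generator of the Lyapunov function. -/
noncomputable def U2fun (η η' M M' z z' : ℝ) : ℝ :=
  -(1/8) * (η * M * (1 + z) ^ 2 * Real.sqrt (1 - z)
      + η' * M' * (1 + z') ^ 2 * Real.sqrt (1 - z'))
    + (1/2) * (1 + z') * Efun η η' M M' z z' * Real.sqrt (1 - z')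

/-- The Lyapunov function V(z,ẑ) = √(1−z) + √(1−ẑ) in the coordinates (z,ẑ). -/
noncomputable def Vfun (z z' : ℝ) : ℝ := Real.sqrt (1 - z) + Real.sqrt (1 - z')

/-- Auxiliary coefficient A of √(1−z) in U₂. -/
noncomputable def Afun (a : ℝ) (p : ℝ × ℝ) : ℝ := -(a/8) * (1 + p.1) ^ 2

/-- Auxiliary coefficient B of √(1−ẑ) in U₂. -/
noncomputable def Bfun (a b : ℝ) (p : ℝ × ℝ) : ℝ :=
  -(b/8) * (1 + p.2) ^ 2
    + (1/2) * (1 + p.2) * (Real.sqrt b * (Real.sqrt b * p.2 - Real.sqrt a * p.1))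

lemma Afun_cont (a : ℝ) : Continuous (Afun a) := by unfold Afun; fun_prop

lemma Bfun_cont (a b : ℝ) : Continuous (Bfun a b) := by unfold Bfun; fun_prop

lemma U2_split (η η' M M' z z' : ℝ) :
    U2fun η η' M M' z z' = Afun (η * M) (z, z') * Real.sqrt (1 - z)
      + Bfun (η * M) (η' * M') (z, z') * Real.sqrt (1 - z') := by
  simp only [U2fun, Efun, Afun, Bfun]; ring

/-- The main auxiliary limsup computation, in terms of a = ηM, b = η̂M̂. -/
lemma aux_limsup (η η' M M' : ℝ) (hη : 0 < η) (hη' : 0 < η') (hM : 0 < M) (hM' : 0 < M') :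
    limsup (fun p : ℝ × ℝ => U2fun η η' M M' p.1 p.2 / Vfun p.1 p.2)
        (nhdsWithin ((1 : ℝ), (1 : ℝ)) (Set.Ico (-1 : ℝ) 1 ×ˢ Set.Ico (-1 : ℝ) 1))
      = (1/2) * (η' * M') - Real.sqrt (η * M) * Real.sqrt (η' * M') := by
  set a := η * M with hadef
  set b := η' * M' with hbdef
  have ha : 0 < a := mul_pos hη hM
  have hb : 0 < b := mul_pos hη' hM'
  have hsa : Real.sqrt a * Real.sqrt a = a := Real.mul_self_sqrt ha.le
  have hsb : Real.sqrt b * Real.sqrt b = b := Real.mul_self_sqrt hb.le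
  set L : ℝ := (1/2) * b - Real.sqrt a * Real.sqrt b with hLdef
  set S : Set (ℝ × ℝ) := Set.Ico (-1 : ℝ) 1 ×ˢ Set.Ico (-1 : ℝ) 1 with hSdef
  set F : Filter (ℝ × ℝ) := nhdsWithin ((1 : ℝ), (1 : ℝ)) S with hFdef
  set u : ℝ × ℝ → ℝ := fun p => U2fun η η' M M' p.1 p.2 / Vfun p.1 p.2 with hudef
  have hne : F.NeBot := by
    apply mem_closure_iff_nhdsWithin_neBot.mp
    rw [hSdef, closure_prod_eq, closure_Ico (by norm_num : (-1 : ℝ) ≠ 1)]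
    exact ⟨Set.right_mem_Icc.2 (by norm_num), Set.right_mem_Icc.2 (by norm_num)⟩
  -- key inequality -(a/2) ≤ L
  have hkey : -(a/2) ≤ L := by
    have := sq_nonneg (Real.sqrt a - Real.sqrt b)
    rw [hLdef]; nlinarith
  -- values of A and B at (1,1)
  have hA11 : Afun a ((1 : ℝ), (1 : ℝ)) = -(a/2) := by simp [Afun]; ring
  have hB11 : Bfun a b ((1 : ℝ), (1 : ℝ)) = L := by
    simp only [Bfun, hLdef]; linear_combination hsb
  -- tendsto of max and min envelopes
  have hGt : Tendsto (fun p => max (Afun a p) (Bfun a b p)) F (𝓝 L) := by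
    have hc : Tendsto (fun p => max (Afun a p) (Bfun a b p)) (𝓝 ((1:ℝ),(1:ℝ)))
        (𝓝 (max (Afun a ((1:ℝ),(1:ℝ))) (Bfun a b ((1:ℝ),(1:ℝ))))) :=
      ((Afun_cont a).max (Bfun_cont a b)).continuousAt
    rw [hA11, hB11, max_eq_right hkey] at hc
    exact hc.mono_left nhdsWithin_le_nhds
  have hgt : Tendsto (fun p => min (Afun a p) (Bfun a b p)) F (𝓝 (min (-(a/2)) L)) := by
    have hc : Tendsto (fun p => min (Afun a p) (Bfun a b p)) (𝓝 ((1:ℝ),(1:ℝ)))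
        (𝓝 (min (Afun a ((1:ℝ),(1:ℝ))) (Bfun a b ((1:ℝ),(1:ℝ))))) :=
      ((Afun_cont a).min (Bfun_cont a b)).continuousAt
    rw [hA11, hB11] at hc
    exact hc.mono_left nhdsWithin_le_nhds
  -- pointwise bounds on S
  have hbound : ∀ p ∈ S, min (Afun a p) (Bfun a b p) ≤ u p ∧
      u p ≤ max (Afun a p) (Bfun a b p) := by
    rintro ⟨z, z'⟩ ⟨hz, hz'⟩
    have hs : 0 < Real.sqrt (1 - z) := Real.sqrt_pos.2 (by simp at hz; linarith [hz.2])
    have ht : 0 < Real.sqrt (1 - z') := Real.sqrt_pos.2 (by simp at hz'; linarith [hz'.2])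
    have hV : 0 < Vfun z z' := by unfold Vfun; linarith
    have hsplit := U2_split η η' M M' z z'
    rw [← hadef, ← hbdef] at hsplit
    constructor
    · show _ ≤ U2fun η η' M M' z z' / Vfun z z'
      rw [le_div_iff₀ hV]
      calc min (Afun a (z,z')) (Bfun a b (z,z')) * Vfun z z'
          = min (Afun a (z,z')) (Bfun a b (z,z')) * Real.sqrt (1-z)
            + min (Afun a (z,z')) (Bfun a b (z,z')) * Real.sqrt (1-z') := by
            unfold Vfun; ring
        _ ≤ Afun a (z,z') * Real.sqrt (1-z) + Bfun a b (z,z') * Real.sqrt (1-z') := by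
            gcongr <;> [exact min_le_left _ _; exact min_le_right _ _]
        _ = U2fun η η' M M' z z' := hsplit.symm
    · show U2fun η η' M M' z z' / Vfun z z' ≤ _
      rw [div_le_iff₀ hV]
      calc U2fun η η' M M' z z'
          = Afun a (z,z') * Real.sqrt (1-z) + Bfun a b (z,z') * Real.sqrt (1-z') := hsplit
        _ ≤ max (Afun a (z,z')) (Bfun a b (z,z')) * Real.sqrt (1-z)
            + max (Afun a (z,z')) (Bfun a b (z,z')) * Real.sqrt (1-z') := by
            gcongr <;> [exact le_max_left _ _; exact le_max_right _ _]
        _ = max (Afun a (z,z')) (Bfun a b (z,z')) * Vfun z z' := by unfold Vfun; ring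
  have hmemS : ∀ᶠ p in F, p ∈ S := eventually_mem_nhdsWithin
  have hub : ∀ᶠ p in F, u p ≤ max (Afun a p) (Bfun a b p) :=
    hmemS.mono fun p hp => (hbound p hp).2
  have hlb : ∀ᶠ p in F, min (Afun a p) (Bfun a b p) ≤ u p :=
    hmemS.mono fun p hp => (hbound p hp).1
  -- boundedness facts
  have hB_above : F.IsBoundedUnder (· ≤ ·) u := by
    obtain ⟨c, hc⟩ := hGt.isBoundedUnder_le
    rw [eventually_map] at hc
    exact ⟨c, eventually_map.2 <| by
      filter_upwards [hub, hc] with p h1 h2 using le_trans h1 h2⟩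
  have hB_below : F.IsBoundedUnder (· ≥ ·) u := by
    obtain ⟨c, hc⟩ := hgt.isBoundedUnder_ge
    rw [eventually_map] at hc
    exact ⟨c, eventually_map.2 <| by
      filter_upwards [hlb, hc] with p h1 h2 using le_trans h2 h1⟩
  -- upper bound for the limsup
  have hup : limsup u F ≤ L := by
    have h1 : limsup u F ≤ limsup (fun p => max (Afun a p) (Bfun a b p)) F :=
      limsup_le_limsup hub hB_below.isCoboundedUnder_le hGt.isBoundedUnder_le
    rwa [hGt.limsup_eq] at h1
  -- lower bound: along the sequence (1 - q_n², 1 - q_n) the ratio tends to L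
  have hlow : L ≤ limsup u F := by
    set q : ℕ → ℝ := fun n => 1 / (n + 1) with hqdef
    have hq0 : ∀ n, 0 < q n := fun n => by positivity
    have hq1 : ∀ n, q n ≤ 1 := fun n => by
      rw [hqdef]; rw [div_le_one (by positivity)]; simp
    have hqt : Tendsto q atTop (𝓝 0) := tendsto_one_div_add_atTop_nhds_zero_nat
    set x : ℕ → ℝ × ℝ := fun n => (1 - (q n) ^ 2, 1 - q n) with hxdef
    have hx1 : Tendsto x atTop (𝓝 ((1:ℝ), (1:ℝ))) := by
      apply Tendsto.prodMk_nhds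
      · have h := (tendsto_const_nhds : Tendsto (fun _ : ℕ => (1:ℝ)) atTop (𝓝 1)).sub (hqt.pow 2)
        simpa using h
      · have h := (tendsto_const_nhds : Tendsto (fun _ : ℕ => (1:ℝ)) atTop (𝓝 1)).sub hqt
        simpa using h
    have hxS : ∀ n, x n ∈ S := by
      intro n
      show (1 - q n ^ 2, 1 - q n) ∈ S
      simp only [hSdef, Set.mem_prod, Set.mem_Ico]
      refine ⟨⟨?_, ?_⟩, ⟨?_, ?_⟩⟩
      · nlinarith [hq0 n, hq1 n]
      · nlinarith [hq0 n]
      · nlinarith [hq0 n, hq1 n]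
      · nlinarith [hq0 n]
    have hxF : Tendsto x atTop F := by
      rw [hFdef, tendsto_nhdsWithin_iff]
      exact ⟨hx1, Eventually.of_forall hxS⟩
    set w : ℕ → ℝ := fun n => Real.sqrt (q n) with hwdef
    have hw0 : ∀ n, 0 < w n := fun n => Real.sqrt_pos.2 (hq0 n)
    have hww : ∀ n, w n * w n = q n := fun n => Real.mul_self_sqrt (hq0 n).le
    have hcalc : ∀ n, u (x n) = (Afun a (x n) * w n + Bfun a b (x n)) / (w n + 1) := by
      intro n
      have h1 : Real.sqrt (1 - (x n).1) = q n := by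
        rw [hxdef]; show Real.sqrt (1 - (1 - q n ^ 2)) = q n
        rw [show 1 - (1 - q n ^ 2) = q n ^ 2 by ring, Real.sqrt_sq (hq0 n).le]
      have h2 : Real.sqrt (1 - (x n).2) = w n := by
        rw [hxdef]; show Real.sqrt (1 - (1 - q n)) = w n
        rw [show 1 - (1 - q n) = q n by ring]
      have hU : U2fun η η' M M' (x n).1 (x n).2
          = w n * (Afun a (x n) * w n + Bfun a b (x n)) := by
        rw [U2_split, h1, h2, ← hww n]; ring
      have hV : Vfun (x n).1 (x n).2 = w n * (w n + 1) := by
        unfold Vfun; rw [h1, h2, ← hww n]; ring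
      rw [hudef]; show U2fun η η' M M' (x n).1 (x n).2 / Vfun (x n).1 (x n).2 = _
      rw [hU, hV, mul_div_mul_left _ _ (hw0 n).ne']
    have hwt : Tendsto w atTop (𝓝 0) := by
      have := (Real.continuous_sqrt.tendsto 0).comp hqt
      simpa [hwdef, Function.comp_def] using this
    have hAx : Tendsto (fun n => Afun a (x n)) atTop (𝓝 (-(a/2))) := by
      have := ((Afun_cont a).tendsto ((1:ℝ),(1:ℝ))).comp hx1
      rw [hA11] at this
      simpa [Function.comp_def] using this
    have hBx : Tendsto (fun n => Bfun a b (x n)) atTop (𝓝 L) := by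
      have := ((Bfun_cont a b).tendsto ((1:ℝ),(1:ℝ))).comp hx1
      rw [hB11] at this
      simpa [Function.comp_def] using this
    have hlim : Tendsto (fun n => u (x n)) atTop (𝓝 L) := by
      have h1 : Tendsto (fun n => (Afun a (x n) * w n + Bfun a b (x n)) / (w n + 1))
          atTop (𝓝 ((-(a/2) * 0 + L) / (0 + 1))) :=
        ((hAx.mul hwt).add hBx).div
          (hwt.add (tendsto_const_nhds : Tendsto (fun _ : ℕ => (1:ℝ)) atTop (𝓝 1)))
          (by norm_num)
      rw [show (-(a/2) * 0 + L) / (0 + 1) = L by ring] at h1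
      exact h1.congr fun n => (hcalc n).symm
    refine le_of_forall_pos_le_add fun ε hε => ?_
    have hfreq : ∃ᶠ p in F, L - ε ≤ u p := by
      have hev : ∀ᶠ n in atTop, L - ε ≤ u (x n) :=
        hlim (eventually_ge_nhds (by linarith))
      exact hxF.frequently hev.frequently
    have := le_limsup_of_frequently_le hfreq hB_above
    linarith
  have : limsup u F = L := le_antisymm hup hlow
  rw [this, hLdef]

theorem limsup_U2_over_V (η η' M M' : ℝ)
    (hη : η ∈ Set.Ioc (0 : ℝ) 1) (hη' : η' ∈ Set.Ioc (0 : ℝ) 1)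
    (hM : 0 < M) (hM' : 0 < M') :
    limsup (fun p : ℝ × ℝ => U2fun η η' M M' p.1 p.2 / Vfun p.1 p.2)
        (nhdsWithin ((1 : ℝ), (1 : ℝ)) (Set.Ico (-1 : ℝ) 1 ×ˢ Set.Ico (-1 : ℝ) 1))
      = (1/2) * max (-(η * M)) (η' * M' - 2 * Real.sqrt (η * η' * M * M')) ∧
    (1/2) * max (-(η * M)) (η' * M' - 2 * Real.sqrt (η * η' * M * M'))
      = (1/2) * (η' * M') - Real.sqrt (η * η' * M * M') ∧
    (limsup (fun p : ℝ × ℝ => U2fun η η' M M' p.1 p.2 / Vfun p.1 p.2)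
        (nhdsWithin ((1 : ℝ), (1 : ℝ)) (Set.Ico (-1 : ℝ) 1 ×ˢ Set.Ico (-1 : ℝ) 1)) < 0
      ↔ η' * M' < 4 * (η * M)) := by
  obtain ⟨hη0, _⟩ := hη
  obtain ⟨hη'0, _⟩ := hη'
  have ha : 0 < η * M := mul_pos hη0 hM
  have hb : 0 < η' * M' := mul_pos hη'0 hM'
  have hr : Real.sqrt (η * η' * M * M') = Real.sqrt (η * M) * Real.sqrt (η' * M') := by
    rw [← Real.sqrt_mul ha.le]; congr 1; ring
  have hsa := Real.mul_self_sqrt ha.le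
  have hsb := Real.mul_self_sqrt hb.le
  have hr0 : 0 ≤ Real.sqrt (η * η' * M * M') := Real.sqrt_nonneg _
  have hmax : max (-(η * M)) (η' * M' - 2 * Real.sqrt (η * η' * M * M'))
      = η' * M' - 2 * Real.sqrt (η * η' * M * M') := by
    apply max_eq_right
    have := sq_nonneg (Real.sqrt (η * M) - Real.sqrt (η' * M'))
    rw [hr]; nlinarith
  have hL := aux_limsup η η' M M' hη0 hη'0 hM hM'
  have h2 : (1/2) * max (-(η * M)) (η' * M' - 2 * Real.sqrt (η * η' * M * M'))
      = (1/2) * (η' * M') - Real.sqrt (η * η' * M * M') := by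
    rw [hmax]; ring
  have h1 : limsup (fun p : ℝ × ℝ => U2fun η η' M M' p.1 p.2 / Vfun p.1 p.2)
        (nhdsWithin ((1 : ℝ), (1 : ℝ)) (Set.Ico (-1 : ℝ) 1 ×ˢ Set.Ico (-1 : ℝ) 1))
      = (1/2) * max (-(η * M)) (η' * M' - 2 * Real.sqrt (η * η' * M * M')) := by
    rw [hL, h2, hr]
  refine ⟨h1, h2, ?_⟩
  rw [h1, h2]
  have hr2 : Real.sqrt (η * η' * M * M') ^ 2 = (η * M) * (η' * M') := by
    rw [hr]; nlinarith
  constructor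
  · intro h
    nlinarith
  · intro h
    have hlt : (1/2 * (η' * M')) ^ 2 < Real.sqrt (η * η' * M * M') ^ 2 := by nlinarith
    nlinarith [abs_le_abs (le_of_lt hlt), sq_nonneg (Real.sqrt (η * η' * M * M') - 1/2 * (η' * M'))]
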